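/- Let m, n, d be positive integers, H ∈ ℝ^{m×d}, E ∈ ℝ^{n×d}, and set Z = H Eᵀ ∈ ℝ^{m×n}. Define the row-wise log-softmax matrix A ∈ ℝ^{m×n} by A_{ij} = Z_{ij} − log(Σ_{k=1}^{n} exp(Z_{ik})). Then the rank of A over ℝ is at most d + 1. -/

import Mathlib

open Matrix

/-- The row-wise log-softmax of a rank-`d` factorized score matrix `Z = H Eᵀ` has rank
at most `d + 1`. -/
theorem log_softmax_rank_le
    (m n d : ℕ) (hm : 0 < m) (hn : 0 < n) (hd : 0 < d)
    (H : Matrix (Fin m) (Fin d) ℝ) (E : Matrix (Fin n) (Fin d) ℝ)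
    (Z : Matrix (Fin m) (Fin n) ℝ) (hZ : Z = H * Eᵀ)
    (A : Matrix (Fin m) (Fin n) ℝ)
    (hA : ∀ i j, A i j = Z i j - Real.log (∑ k, Real.exp (Z i k))) :
    A.rank ≤ d + 1 := by
  have key : A =
      (Matrix.of fun i (j : Fin (d+1)) =>
        Fin.lastCases (-(Real.log (∑ k, Real.exp (Z i k)))) (fun j' => H i j') j : Matrix (Fin m) (Fin (d+1)) ℝ) *
      (Matrix.of fun (j : Fin (d+1)) k =>
        Fin.lastCases (1 : ℝ) (fun j' => E k j') j : Matrix (Fin (d+1)) (Fin n) ℝ) := by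
    refine Matrix.ext fun i k => ?_
    simp only [Matrix.mul_apply, Matrix.of_apply]
    rw [Fin.sum_univ_castSucc]
    simp only [Fin.lastCases_castSucc, Fin.lastCases_last]
    rw [hA, hZ]
    simp [Matrix.mul_apply, sub_eq_add_neg]
  rw [key]
  exact le_trans (Matrix.rank_mul_le_right _ _)
    (by simpa using Matrix.rank_le_height _)
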